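/- Let 2 ≤ ℓ ≤ k and let S ⊆ B_n. For w ∈ P^{n-1}(F_q), set t_{w,S} = |{v ∈ S : (ρ_n ∘ γ_n)(v) = w}|. Then S is (k,ℓ)-orthogonal if and only if for every subset I ⊆ P^{n-1}(F_q) of (projective) dimension at most ℓ-2, one has Σ_{w ∈ I} t_{w,S} ≤ k-1. -/

import Mathlib

open scoped NNReal

/-- The infinity norm on `K^n` induced by an absolute value `abv` on `K`. -/
noncomputable def vnorm {K : Type} [Field K] (abv : K → ℝ≥0) {n : ℕ}
    (v : Fin n → K) : ℝ≥0 :=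
  Finset.univ.sup fun i => abv (v i)

/-- A finite set of vectors of `K^n` is orthogonal if its elements are nonzero and the norm of
any linear combination of its elements is the maximum of the norms of the summands. -/
def IsOrthSet {K : Type} [Field K] (abv : K → ℝ≥0) {n : ℕ}
    (F : Finset (Fin n → K)) : Prop :=
  (∀ v ∈ F, v ≠ 0) ∧
    ∀ c : (Fin n → K) → K,
      vnorm abv (∑ v ∈ F, c v • v) = F.sup fun v => vnorm abv (c v • v)

/-- A finite set `S` of vectors is `(k, l)`-orthogonal if any subset of `S` of size `k`
contains an orthogonal subset of size `l`. -/
def IsKLOrth {K : Type} [Field K] (abv : K → ℝ≥0) {n : ℕ} (k l : ℕ)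
    (S : Finset (Fin n → K)) : Prop :=
  ∀ E ⊆ S, E.card = k → ∃ F ⊆ E, F.card = l ∧ IsOrthSet abv F

/-- `Theta abv n k l` is the maximum size of a `(k, l)`-orthogonal subset of the unit
sphere of `K^n`. -/
noncomputable def Theta {K : Type} [Field K] (abv : K → ℝ≥0) (n k l : ℕ) : ℕ :=
  sSup {m | ∃ S : Finset (Fin n → K),
    (∀ v ∈ S, vnorm abv v = 1) ∧ IsKLOrth abv k l S ∧ S.card = m}

/-- A subset `S` of `K^n` is `(k, l)`-orthogonal if any finite subset of `S` of size `k`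
contains an orthogonal subset of size `l`. -/
def IsKLOrthSet {K : Type} [Field K] (abv : K → ℝ≥0) {n : ℕ} (k l : ℕ)
    (S : Set (Fin n → K)) : Prop :=
  ∀ E : Finset (Fin n → K), ↑E ⊆ S → E.card = k → ∃ F ⊆ E, F.card = l ∧ IsOrthSet abv F

section Aux

variable {K : Type} [Field K] {abv : K → ℝ≥0} {n : ℕ} {κ : Type} [Field κ] {res : K → κ}

lemma habv_zero (habv0 : ∀ x : K, abv x = 0 ↔ x = 0) : abv 0 = 0 := (habv0 0).mpr rfl

lemma habv_one (habv0 : ∀ x : K, abv x = 0 ↔ x = 0)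
    (habvmul : ∀ x y : K, abv (x * y) = abv x * abv y) : abv 1 = 1 := by
  have h1 : abv 1 * abv 1 = abv 1 * 1 := by rw [← habvmul, mul_one, mul_one]
  have h2 : abv 1 ≠ 0 := fun h => one_ne_zero ((habv0 1).mp h)
  exact mul_left_cancel₀ h2 h1

lemma abv_sum_le (habv0 : ∀ x : K, abv x = 0 ↔ x = 0)
    (habvadd : ∀ x y : K, abv (x + y) ≤ max (abv x) (abv y))
    {α : Type*} (s : Finset α) (f : α → K) (h : ∀ a ∈ s, abv (f a) ≤ 1) :
    abv (∑ a ∈ s, f a) ≤ 1 := by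
  induction s using Finset.cons_induction with
  | empty => simp [habv_zero habv0]
  | cons a s ha ih =>
    rw [Finset.sum_cons]
    refine le_trans (habvadd _ _) (max_le (h a (Finset.mem_cons_self a s)) ?_)
    exact ih fun b hb => h b (Finset.mem_cons_of_mem hb)

lemma hres_zero' (habv0 : ∀ x : K, abv x = 0 ↔ x = 0)
    (hres_add : ∀ x y : K, abv x ≤ 1 → abv y ≤ 1 → res (x + y) = res x + res y) :
    res 0 = 0 := by
  have h0 : abv (0 : K) ≤ 1 := by rw [habv_zero habv0]; exact zero_le_one
  have := hres_add 0 0 h0 h0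
  rw [add_zero] at this
  exact (left_eq_add.mp this)

lemma res_sum (habv0 : ∀ x : K, abv x = 0 ↔ x = 0)
    (habvadd : ∀ x y : K, abv (x + y) ≤ max (abv x) (abv y))
    (hres_add : ∀ x y : K, abv x ≤ 1 → abv y ≤ 1 → res (x + y) = res x + res y)
    {α : Type*} (s : Finset α) (f : α → K) (h : ∀ a ∈ s, abv (f a) ≤ 1) :
    res (∑ a ∈ s, f a) = ∑ a ∈ s, res (f a) := by
  induction s using Finset.cons_induction with
  | empty => simp [hres_zero' habv0 hres_add]
  | cons a s ha ih =>
    rw [Finset.sum_cons, Finset.sum_cons,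
      hres_add _ _ (h a (Finset.mem_cons_self a s))
        (abv_sum_le habv0 habvadd s f fun b hb => h b (Finset.mem_cons_of_mem hb)),
      ih fun b hb => h b (Finset.mem_cons_of_mem hb)]

lemma vnorm_smul (habvmul : ∀ x y : K, abv (x * y) = abv x * abv y)
    (c : K) (v : Fin n → K) : vnorm abv (c • v) = abv c * vnorm abv v := by
  unfold vnorm
  rw [NNReal.mul_finset_sup]
  simp [habvmul]

lemma vnorm_zero (habv0 : ∀ x : K, abv x = 0 ↔ x = 0) : vnorm abv (0 : Fin n → K) = 0 := by
  unfold vnorm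
  simp [habv_zero habv0]

lemma coord_le_of_vnorm_le {v : Fin n → K} {t : ℝ≥0} (h : vnorm abv v ≤ t) (i : Fin n) :
    abv (v i) ≤ t :=
  le_trans (Finset.le_sup (f := fun i => abv (v i)) (Finset.mem_univ i)) h

lemma exists_coord_eq_one {v : Fin n → K} (h : vnorm abv v = 1) : ∃ i, abv (v i) = 1 := by
  rcases Finset.univ.eq_empty_or_nonempty (α := Fin n) with he | hne
  · exfalso
    unfold vnorm at h
    rw [he] at h
    simp at h
  · obtain ⟨i, -, hi⟩ := Finset.exists_mem_eq_sup Finset.univ hne fun i => abv (v i)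
    refine ⟨i, ?_⟩
    rw [← hi]
    exact h

lemma gamma_ne_zero {v : Fin n → K} (h : vnorm abv v = 1)
    (hres_zero : ∀ x : K, abv x ≤ 1 → (res x = 0 ↔ abv x < 1)) :
    (fun i => res (v i)) ≠ 0 := by
  obtain ⟨i, hi⟩ := exists_coord_eq_one h
  intro h0
  have : res (v i) = 0 := congrFun h0 i
  rw [hres_zero _ (le_of_eq hi), hi] at this
  exact lt_irrefl 1 this

/-- Lemma A : independent reductions imply orthogonality. -/
lemma isOrthSet_of_indep
    (habv0 : ∀ x : K, abv x = 0 ↔ x = 0)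
    (habvmul : ∀ x y : K, abv (x * y) = abv x * abv y)
    (habvadd : ∀ x y : K, abv (x + y) ≤ max (abv x) (abv y))
    (hres_add : ∀ x y : K, abv x ≤ 1 → abv y ≤ 1 → res (x + y) = res x + res y)
    (hres_mul : ∀ x y : K, abv x ≤ 1 → abv y ≤ 1 → res (x * y) = res x * res y)
    (hres_one : res 1 = 1)
    (hres_zero : ∀ x : K, abv x ≤ 1 → (res x = 0 ↔ abv x < 1))
    (F : Finset (Fin n → K))
    (hF1 : ∀ v ∈ F, vnorm abv v = 1)
    (hind : ∀ g : (Fin n → K) → κ,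
      (∑ v ∈ F, g v • (fun i => res (v i))) = 0 → ∀ v ∈ F, g v = 0) :
    IsOrthSet abv F := by
  constructor
  · intro v hv h0
    have := hF1 v hv
    rw [h0, vnorm_zero habv0] at this
    exact zero_ne_one this
  intro c
  have hRHS : (F.sup fun v => vnorm abv (c v • v)) = F.sup fun v => abv (c v) := by
    refine Finset.sup_congr rfl fun v hv => ?_
    rw [vnorm_smul habvmul, hF1 v hv, mul_one]
  rw [hRHS]
  set M := F.sup fun v => abv (c v) with hM
  by_cases hM0 : M = 0
  · have hc0 : ∀ v ∈ F, c v = 0 := by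
      intro v hv
      have : abv (c v) ≤ M := Finset.le_sup (f := fun v => abv (c v)) hv
      rw [hM0] at this
      exact (habv0 _).mp (le_antisymm this zero_le)
    have : (∑ v ∈ F, c v • v) = 0 := Finset.sum_eq_zero fun v hv => by rw [hc0 v hv, zero_smul]
    rw [this, vnorm_zero habv0, hM0]
  · have hFne : F.Nonempty := by
      rcases F.eq_empty_or_nonempty with h | h
      · exfalso; apply hM0; rw [hM, h]; simp
      · exact h
    obtain ⟨j, hjF, hMj⟩ := Finset.exists_mem_eq_sup F hFne fun v => abv (c v)
    have hcj : c j ≠ 0 := fun h => hM0 (by rw [hM, hMj, h, habv_zero habv0])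
    have hcjpos : 0 < abv (c j) := by
      rw [pos_iff_ne_zero]
      exact fun h => hcj ((habv0 _).mp h)
    set u : Fin n → K := ∑ v ∈ F, (c v / c j) • v with hu
    have hsum : (∑ v ∈ F, c v • v) = c j • u := by
      rw [hu, Finset.smul_sum]
      refine Finset.sum_congr rfl fun v hv => ?_
      rw [smul_smul, mul_div_cancel₀ _ hcj]
    have hdiv_le : ∀ v ∈ F, abv (c v / c j) ≤ 1 := by
      intro v hv
      have h1 : abv (c v / c j) * abv (c j) = abv (c v) := by
        rw [← habvmul, div_mul_cancel₀ _ hcj]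
      have h2 : abv (c v) ≤ abv (c j) := by
        rw [← hMj]; exact Finset.le_sup (f := fun v => abv (c v)) hv
      have := h1.le.trans h2
      calc abv (c v / c j) = abv (c v / c j) * abv (c j) / abv (c j) := by
            rw [mul_div_cancel_right₀ _ (ne_of_gt hcjpos)]
        _ ≤ abv (c j) / abv (c j) := by gcongr
        _ = 1 := div_self (ne_of_gt hcjpos)
    have hcoord : ∀ i, u i = ∑ v ∈ F, (c v / c j) * v i := by
      intro i
      rw [hu]
      simp [Finset.sum_apply]
    have hterm_le : ∀ i, ∀ v ∈ F, abv ((c v / c j) * v i) ≤ 1 := by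
      intro i v hv
      rw [habvmul]
      exact mul_le_one' (hdiv_le v hv) (coord_le_of_vnorm_le (le_of_eq (hF1 v hv)) i)
    have hu_le : ∀ i, abv (u i) ≤ 1 := by
      intro i
      rw [hcoord i]
      exact abv_sum_le habv0 habvadd F _ (hterm_le i)
    have hres_u : ∀ i, res (u i) = ∑ v ∈ F, res (c v / c j) * res (v i) := by
      intro i
      rw [hcoord i, res_sum habv0 habvadd hres_add F _ (hterm_le i)]
      refine Finset.sum_congr rfl fun v hv => ?_
      exact hres_mul _ _ (hdiv_le v hv) (coord_le_of_vnorm_le (le_of_eq (hF1 v hv)) i)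
    have hgu_ne : (fun i => res (u i)) ≠ 0 := by
      intro h0
      have heq : (∑ v ∈ F, (fun w => res (c w / c j)) v • (fun i => res (v i))) = 0 := by
        funext i
        rw [← congrFun h0 i, hres_u i]
        simp [Finset.sum_apply]
      have := hind _ heq j hjF
      rw [div_self hcj, hres_one] at this
      exact one_ne_zero this
    have hvu : vnorm abv u = 1 := by
      refine le_antisymm (Finset.sup_le fun i _ => hu_le i) ?_
      have : ∃ i, res (u i) ≠ 0 := by
        by_contra h
        push_neg at h
        exact hgu_ne (funext h)
      obtain ⟨i, hi⟩ := this
      have h1 : abv (u i) = 1 := by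
        rcases lt_or_eq_of_le (hu_le i) with h | h
        · exact absurd ((hres_zero _ (hu_le i)).mpr h) hi
        · exact h
      calc (1 : ℝ≥0) = abv (u i) := h1.symm
        _ ≤ vnorm abv u := Finset.le_sup (f := fun i => abv (u i)) (Finset.mem_univ i)
    rw [hsum, vnorm_smul habvmul, hvu, mul_one, hM, hMj]

/-- Lemma B : orthogonality implies independent reductions. -/
lemma indep_of_isOrthSet
    (habv0 : ∀ x : K, abv x = 0 ↔ x = 0)
    (habvmul : ∀ x y : K, abv (x * y) = abv x * abv y)
    (habvadd : ∀ x y : K, abv (x + y) ≤ max (abv x) (abv y))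
    (hres_add : ∀ x y : K, abv x ≤ 1 → abv y ≤ 1 → res (x + y) = res x + res y)
    (hres_mul : ∀ x y : K, abv x ≤ 1 → abv y ≤ 1 → res (x * y) = res x * res y)
    (hres_zero : ∀ x : K, abv x ≤ 1 → (res x = 0 ↔ abv x < 1))
    (hres_surj : ∀ c : κ, ∃ x : K, abv x ≤ 1 ∧ res x = c)
    (F : Finset (Fin n → K))
    (hF1 : ∀ v ∈ F, vnorm abv v = 1)
    (horth : IsOrthSet abv F) :
    ∀ g : (Fin n → K) → κ,
      (∑ v ∈ F, g v • (fun i => res (v i))) = 0 → ∀ v ∈ F, g v = 0 := by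
  intro g hg
  by_contra hcon
  push_neg at hcon
  obtain ⟨v0, hv0F, hgv0⟩ := hcon
  set c : (Fin n → K) → K := fun v => (hres_surj (g v)).choose with hc
  have hcle : ∀ v, abv (c v) ≤ 1 := fun v => (hres_surj (g v)).choose_spec.1
  have hcres : ∀ v, res (c v) = g v := fun v => (hres_surj (g v)).choose_spec.2
  have key := horth.2 c
  -- RHS ≥ 1
  have hcv0 : abv (c v0) = 1 := by
    rcases lt_or_eq_of_le (hcle v0) with h | h
    · exact absurd ((hres_zero _ (hcle v0)).mpr h) (by rw [hcres]; exact hgv0)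
    · exact h
  have hRHS : (1 : ℝ≥0) ≤ F.sup fun v => vnorm abv (c v • v) := by
    calc (1 : ℝ≥0) = vnorm abv (c v0 • v0) := by
          rw [vnorm_smul habvmul, hF1 v0 hv0F, mul_one, hcv0]
      _ ≤ _ := Finset.le_sup (f := fun v => vnorm abv (c v • v)) hv0F
  -- LHS < 1
  have hterm_le : ∀ i, ∀ v ∈ F, abv (c v * v i) ≤ 1 := by
    intro i v hv
    rw [habvmul]
    exact mul_le_one' (hcle v) (coord_le_of_vnorm_le (le_of_eq (hF1 v hv)) i)
  have hcoord : ∀ i, (∑ v ∈ F, c v • v) i = ∑ v ∈ F, c v * v i := by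
    intro i; simp [Finset.sum_apply]
  have hLHS : vnorm abv (∑ v ∈ F, c v • v) < 1 := by
    rw [vnorm]
    rw [Finset.sup_lt_iff (by norm_num : (⊥ : ℝ≥0) < 1)]
    intro i _
    have hle : abv ((∑ v ∈ F, c v • v) i) ≤ 1 := by
      rw [hcoord i]
      exact abv_sum_le habv0 habvadd F _ (hterm_le i)
    rw [← hres_zero _ hle]
    rw [hcoord i, res_sum habv0 habvadd hres_add F _ (hterm_le i)]
    have : ∀ v ∈ F, res (c v * v i) = g v * res (v i) := fun v hv => by
      rw [hres_mul _ _ (hcle v) (coord_le_of_vnorm_le (le_of_eq (hF1 v hv)) i), hcres]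
    rw [Finset.sum_congr rfl this]
    have := congrFun hg i
    simpa [Finset.sum_apply] using this
  rw [key] at hLHS
  exact absurd hRHS (not_le_of_gt hLHS)

end Aux

set_option maxHeartbeats 2000000 in
/-- **Characterization of `(k,l)`-orthogonality by fiber counts.**
Let `2 ≤ l ≤ k` and let `S` be a subset of the unit sphere of `K^n`, where `K` is a discrete
valued field with finite residue field `κ` of cardinality `q`, `γ_n` the coordinatewise
reduction `res`, `ρ_n` the projection to `ℙ^{n-1}(κ)`. Then `S` is `(k,l)`-orthogonal iff
for every subset `I ⊆ ℙ^{n-1}(κ)` whose projective span has (projective) dimension at most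
`l - 2`, the total number of elements of `S` mapping under `ρ_n ∘ γ_n` into `I` (which is
`Σ_{w ∈ I} t_{w,S}`) is at most `k - 1`. -/
theorem isKLOrth_iff_fiber_sums {K : Type} [Field K] (q n k l : ℕ) (abv : K → ℝ≥0)
    (κ : Type) [Field κ] [Fintype κ] (res : K → κ)
    (hq : Fintype.card κ = q)
    (habv0 : ∀ x : K, abv x = 0 ↔ x = 0)
    (habvmul : ∀ x y : K, abv (x * y) = abv x * abv y)
    (habvadd : ∀ x y : K, abv (x + y) ≤ max (abv x) (abv y))
    (habvdisc : ∀ x : K, x ≠ 0 → ∃ e : ℤ, abv x = (q : ℝ≥0) ^ e)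
    (hres_add : ∀ x y : K, abv x ≤ 1 → abv y ≤ 1 → res (x + y) = res x + res y)
    (hres_mul : ∀ x y : K, abv x ≤ 1 → abv y ≤ 1 → res (x * y) = res x * res y)
    (hres_one : res 1 = 1)
    (hres_zero : ∀ x : K, abv x ≤ 1 → (res x = 0 ↔ abv x < 1))
    (hres_surj : ∀ c : κ, ∃ x : K, abv x ≤ 1 ∧ res x = c)
    (hl : 2 ≤ l) (hlk : l ≤ k)
    (S : Set (Fin n → K)) (hS : ∀ v ∈ S, vnorm abv v = 1) :
    IsKLOrthSet abv k l S ↔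
      ∀ I : Set (Projectivization κ (Fin n → κ)),
        (Module.finrank κ ↥(⨆ p ∈ I, Projectivization.submodule p) : ℤ) - 1 ≤ (l : ℤ) - 2 →
          Set.encard {w : Fin n → K | w ∈ S ∧
              ∃ h : (fun i => res (w i)) ≠ 0, Projectivization.mk κ (fun i => res (w i)) h ∈ I}
            ≤ ((k - 1 : ℕ) : ℕ∞) := by
  classical
  constructor
  · -- (k,l)-orthogonal implies fiber count bound
    intro horth I hI
    by_contra hcard
    push_neg at hcard
    set T := {w : Fin n → K | w ∈ S ∧
        ∃ h : (fun i => res (w i)) ≠ 0, Projectivization.mk κ (fun i => res (w i)) h ∈ I}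
      with hT
    have hk : (k : ℕ∞) ≤ T.encard := by
      have h1 := Order.add_one_le_of_lt hcard
      have hk1 : ((k - 1 : ℕ) : ℕ∞) + 1 = (k : ℕ∞) := by
        have hk2 : k - 1 + 1 = k := by omega
        rw [← hk2]
        push_cast
        rfl
      rwa [hk1] at h1
    obtain ⟨t, htT, htenc⟩ := Set.exists_subset_encard_eq hk
    have tfin : t.Finite := Set.finite_of_encard_eq_coe htenc
    set E := tfin.toFinset with hE
    have hEcard : E.card = k := by
      have h2 := tfin.encard_eq_coe_toFinset_card
      rw [htenc] at h2
      exact_mod_cast h2.symm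
    have hEt : ∀ v ∈ E, v ∈ T := fun v hv => htT (tfin.mem_toFinset.mp hv)
    have hES : ↑E ⊆ S := fun v hv => (hEt v hv).1
    obtain ⟨F, hFE, hFl, hFOrth⟩ := horth E hES hEcard
    have hF1 : ∀ v ∈ F, vnorm abv v = 1 := fun v hv => hS v (hES (hFE hv))
    have hindep := indep_of_isOrthSet habv0 habvmul habvadd hres_add hres_mul
      hres_zero hres_surj F hF1 hFOrth
    set W := ⨆ p ∈ I, Projectivization.submodule p with hW
    have hmemW : ∀ v ∈ F, (fun i => res (v i)) ∈ W := by
      intro v hv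
      obtain ⟨h, hmk⟩ := (hEt v (hFE hv)).2
      have hle : Projectivization.submodule (Projectivization.mk κ (fun i => res (v i)) h) ≤ W :=
        le_iSup₂ (f := fun p (_ : p ∈ I) => Projectivization.submodule p) _ hmk
      apply hle
      rw [Projectivization.submodule_mk]
      exact Submodule.mem_span_singleton_self _
    have hli : LinearIndependent κ
        (fun v : {x // x ∈ F} => (⟨(fun i => res (v.1 i)), hmemW v.1 v.2⟩ : W)) := by
      rw [Fintype.linearIndependent_iff]
      intro g hg
      have hg' : (∑ v ∈ F.attach, g v • (fun i => res (v.1 i))) = 0 := by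
        have h3 := congrArg (Submodule.subtype W) hg
        simpa using h3
      set G : (Fin n → K) → κ := fun v => if h : v ∈ F then g ⟨v, h⟩ else 0 with hG
      have hsum : (∑ v ∈ F, G v • (fun i => res (v i))) = 0 := by
        rw [← Finset.sum_attach F (fun v => G v • (fun i => res (v i))), ← hg']
        refine Finset.sum_congr rfl fun v _ => ?_
        simp [hG, v.2]
      intro v
      have h4 := hindep G hsum v.1 v.2
      simpa [hG, v.2] using h4
    have hcardle : l ≤ Module.finrank κ ↥W := by
      have h5 := hli.fintype_card_le_finrank
      rwa [Fintype.card_coe, hFl] at h5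
    have h6 : ((l : ℤ)) ≤ (Module.finrank κ ↥W : ℤ) := by exact_mod_cast hcardle
    omega
  · -- fiber count bound implies (k,l)-orthogonal
    intro hfib E hES hEk
    have hEvn : ∀ v ∈ E, vnorm abv v = 1 := fun v hv => hS v (hES hv)
    set W := Submodule.span κ ((fun v => fun i => res (v i)) '' (↑E : Set (Fin n → K))) with hW
    by_cases hrk : l ≤ Module.finrank κ ↥W
    · -- build an orthogonal subset of size l
      obtain ⟨b, hbsub, hbspan, hbind⟩ :=
        exists_linearIndependent κ ((fun v => fun i => res (v i)) '' (↑E : Set (Fin n → K)))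
      have hbfin : b.Finite := ((E : Set (Fin n → K)).toFinite.image _).subset hbsub
      set B := hbfin.toFinset with hB
      have hmemB : ∀ x, x ∈ B ↔ x ∈ b := fun x => hbfin.mem_toFinset
      have hBcoe : (B : Set (Fin n → κ)) = b := hbfin.coe_toFinset
      have hliB : LinearIndependent κ (fun u : {x // x ∈ B} => (u.1 : Fin n → κ)) := by
        refine hbind.comp (fun u : {x // x ∈ B} => (⟨u.1, (hmemB u.1).mp u.2⟩ : b)) ?_
        intro a c hac
        have h7 : ((⟨a.1, (hmemB a.1).mp a.2⟩ : b) : Fin n → κ)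
            = ((⟨c.1, (hmemB c.1).mp c.2⟩ : b) : Fin n → κ) := congrArg Subtype.val hac
        exact Subtype.ext h7
      have hBcard : l ≤ B.card := by
        have h1 : Module.finrank κ ↥(Submodule.span κ (B : Set (Fin n → κ))) = B.card :=
          finrank_span_finset_eq_card hliB
        rw [hBcoe, hbspan, ← hW] at h1
        rw [← h1]
        exact hrk
      set vf : (Fin n → κ) → (Fin n → K) := fun u =>
        if h : ∃ w, w ∈ E ∧ (fun i => res (w i)) = u then h.choose else 0 with hvfdef
      have hvf : ∀ u ∈ B, vf u ∈ E ∧ (fun i => res ((vf u) i)) = u := by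
        intro u hu
        have hex : ∃ w, w ∈ E ∧ (fun i => res (w i)) = u := by
          obtain ⟨w, hw, hwu⟩ := hbsub ((hmemB u).mp hu)
          exact ⟨w, hw, hwu⟩
        rw [hvfdef]
        simp only [dif_pos hex]
        exact ⟨hex.choose_spec.1, hex.choose_spec.2⟩
      set F0 := B.image vf with hF0
      have hF0card : F0.card = B.card := by
        rw [hF0]
        apply Finset.card_image_of_injOn
        intro x hx y hy hxy
        rw [← (hvf x hx).2, ← (hvf y hy).2, hxy]
      obtain ⟨F, hFF0, hFcard⟩ :=
        Finset.exists_subset_card_eq (show l ≤ F0.card by rw [hF0card]; exact hBcard)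
      have hFE : F ⊆ E := by
        refine subset_trans hFF0 ?_
        rw [hF0]
        intro v hv
        obtain ⟨u, hu, rfl⟩ := Finset.mem_image.mp hv
        exact (hvf u hu).1
      have hstr : ∀ v ∈ F, (fun i => res (v i)) ∈ B ∧ vf (fun i => res (v i)) = v := by
        intro v hv
        obtain ⟨u, huB, hueq⟩ := Finset.mem_image.mp (hFF0 hv)
        have h2 := (hvf u huB).2
        subst hueq
        rw [h2]
        exact ⟨huB, rfl⟩
      have hF1 : ∀ v ∈ F, vnorm abv v = 1 := fun v hv => hEvn v (hFE hv)
      have hFimg_sub : F.image (fun w => fun i => res (w i)) ⊆ B := by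
        intro u hu
        obtain ⟨v, hv, rfl⟩ := Finset.mem_image.mp hu
        exact (hstr v hv).1
      have hγinj : ∀ x ∈ F, ∀ y ∈ F,
          (fun i => res (x i)) = (fun i => res (y i)) → x = y := by
        intro x hx y hy hxy
        have h3 := (hstr x hx).2
        rw [hxy] at h3
        rw [← h3, (hstr y hy).2]
      have hindF : ∀ g : (Fin n → K) → κ,
          (∑ v ∈ F, g v • (fun i => res (v i))) = 0 → ∀ v ∈ F, g v = 0 := by
        intro g hg v hv
        have hliB' := Fintype.linearIndependent_iff.mp hliB
        set G : {x // x ∈ B} → κ := fun u =>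
          if u.1 ∈ F.image (fun w => fun i => res (w i)) then g (vf u.1) else 0 with hG
        have hGsum : (∑ u : {x // x ∈ B}, G u • u.1) = 0 := by
          have e1 : (∑ u : {x // x ∈ B}, G u • u.1) = ∑ u ∈ B,
              (if u ∈ F.image (fun w => fun i => res (w i)) then g (vf u) else 0) • u := by
            rw [Finset.univ_eq_attach, ← Finset.sum_attach B
              (fun w => (if w ∈ F.image (fun w => fun i => res (w i)) then g (vf w) else 0) • w)]
          have e2 : (∑ u ∈ B,
              (if u ∈ F.image (fun w => fun i => res (w i)) then g (vf u) else 0) • u)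
              = ∑ u ∈ F.image (fun w => fun i => res (w i)),
              (if u ∈ F.image (fun w => fun i => res (w i)) then g (vf u) else 0) • u :=
            (Finset.sum_subset hFimg_sub (fun x _ hnx => by rw [if_neg hnx, zero_smul])).symm
          have e3 : (∑ u ∈ F.image (fun w => fun i => res (w i)),
              (if u ∈ F.image (fun w => fun i => res (w i)) then g (vf u) else 0) • u)
              = ∑ u ∈ F.image (fun w => fun i => res (w i)), g (vf u) • u :=
            Finset.sum_congr rfl fun u hu => by rw [if_pos hu]
          rw [e1, e2, e3, Finset.sum_image hγinj, ← hg]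
          refine Finset.sum_congr rfl fun w hw => ?_
          rw [(hstr w hw).2]
        have h4 := hliB' G hGsum
          ⟨(fun i => res (v i)), hFimg_sub (Finset.mem_image_of_mem _ hv)⟩
        rw [hG] at h4
        simpa [Finset.mem_image_of_mem _ hv, (hstr v hv).2] using h4
      exact ⟨F, hFE, hFcard, isOrthSet_of_indep habv0 habvmul habvadd hres_add hres_mul
        hres_one hres_zero F hF1 hindF⟩
    · -- otherwise the reductions of E lie in a small subspace, contradiction
      exfalso
      push_neg at hrk
      set I : Set (Projectivization κ (Fin n → κ)) :=
        {p | ∃ v, ∃ _ : v ∈ E, ∃ h : (fun i => res (v i)) ≠ 0,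
          p = Projectivization.mk κ (fun i => res (v i)) h} with hI
      have hle : (⨆ p ∈ I, Projectivization.submodule p) ≤ W := by
        refine iSup₂_le fun p hp => ?_
        obtain ⟨v, hv, h, rfl⟩ := hp
        rw [Projectivization.submodule_mk]
        refine Submodule.span_le.mpr ?_
        rintro x hx
        rw [Set.mem_singleton_iff.mp hx]
        exact Submodule.subset_span ⟨v, hv, rfl⟩
      have hfr : Module.finrank κ ↥(⨆ p ∈ I, Projectivization.submodule p) ≤
          Module.finrank κ ↥W := Submodule.finrank_mono hle
      have hdim : (Module.finrank κ ↥(⨆ p ∈ I, Projectivization.submodule p) : ℤ) - 1 ≤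
          (l : ℤ) - 2 := by
        have h1 : ((Module.finrank κ ↥(⨆ p ∈ I, Projectivization.submodule p)) : ℤ) ≤
            (Module.finrank κ ↥W : ℤ) := by exact_mod_cast hfr
        have h2 : (Module.finrank κ ↥W : ℤ) < (l : ℤ) := by exact_mod_cast hrk
        omega
      have hcount := hfib I hdim
      have hsubT : (↑E : Set (Fin n → K)) ⊆ {w : Fin n → K | w ∈ S ∧
          ∃ h : (fun i => res (w i)) ≠ 0, Projectivization.mk κ (fun i => res (w i)) h ∈ I} := by
        intro v hv
        have hvS : v ∈ S := hES hv
        have hne : (fun i => res (v i)) ≠ 0 := gamma_ne_zero (hS v hvS) hres_zero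
        exact ⟨hvS, hne, ⟨v, hv, hne, rfl⟩⟩
      have h5 := (Set.encard_mono hsubT).trans hcount
      rw [Set.encard_coe_eq_coe_finsetCard, hEk] at h5
      have h6 : k ≤ k - 1 := by exact_mod_cast h5
      omega
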